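/- arXiv:2201.11505 — 3 statements merged into one kernel-verified Lean document; each statement's English description precedes it below -/
import Mathlib

section
/- Let G be a pentagraph that has an induced subgraph isomorphic to the Petersen graph. Then either G is isomorphic to the Petersen graph, or G admits a clique cutset. -/
open SimpleGraph

variable {V : Type*}

/-- A walk is an *induced (chordless) path* if it is a path and every edge of `G` joining
two of its vertices is an edge of the path. -/
def IsIndPath (G : SimpleGraph V) {u v : V} (p : G.Walk u v) : Prop :=
  p.IsPath ∧ ∀ x ∈ p.support, ∀ y ∈ p.support, G.Adj x y → s(x, y) ∈ p.edges

/-- The interior (set of internal vertices) of a walk from `u` to `v`. -/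
def interiorSet {G : SimpleGraph V} {u v : V} (p : G.Walk u v) : Set V :=
  {x | x ∈ p.support ∧ x ≠ u ∧ x ≠ v}

/-- An *induced cycle*: a cycle such that every edge of `G` joining two of its vertices is an
edge of the cycle. -/
def IsIndCycle (G : SimpleGraph V) {u : V} (c : G.Walk u u) : Prop :=
  c.IsCycle ∧ ∀ x ∈ c.support, ∀ y ∈ c.support, G.Adj x y → s(x, y) ∈ c.edges

/-- A *pentagraph*: every cycle has length at least five, and every induced cycle of odd
length has length exactly five. -/
def IsPentagraph (G : SimpleGraph V) : Prop :=
  (∀ (u : V) (c : G.Walk u u), c.IsCycle → 5 ≤ c.length) ∧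
  (∀ (u : V) (c : G.Walk u u), IsIndCycle G c → Odd c.length → c.length = 5)

/-- Removing the vertex set `X` disconnects `G`: two vertices outside `X` are not joined by
any path avoiding `X`. -/
def RemovalDisconnects (G : SimpleGraph V) (X : Set V) : Prop :=
  ∃ a b : ↥(Xᶜ), ¬ (G.induce Xᶜ).Reachable a b

/-- `G` admits a `P₃`-cutset: an induced three-vertex path whose deletion disconnects `G`. -/
def HasP3Cutset (G : SimpleGraph V) : Prop :=
  ∃ v₁ v₂ v₃ : V, G.Adj v₁ v₂ ∧ G.Adj v₂ v₃ ∧ ¬ G.Adj v₁ v₃ ∧ v₁ ≠ v₃ ∧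
    RemovalDisconnects G ({v₁, v₂, v₃} : Set V)

/-- `A` is (the vertex set of) a connected component of `G ∖ X`. -/
def IsCompOf (G : SimpleGraph V) (X : Set V) (A : Set V) : Prop :=
  A.Nonempty ∧ A ⊆ Xᶜ ∧ (G.induce A).Connected ∧
    ∀ u ∈ A, ∀ w ∈ Xᶜ, G.Adj u w → w ∈ A

/-- `G` admits a strong parity star-cutset. -/
def HasStrongParityStarCutset (G : SimpleGraph V) : Prop :=
  ∃ X : Set V, RemovalDisconnects G X ∧
    ∃ x ∈ X, (∀ y ∈ X, y ≠ x → G.Adj x y) ∧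
      ∃ A : Set V, IsCompOf G X A ∧
        (∀ y ∈ X, y ≠ x → ∀ z ∈ X, z ≠ x → y ≠ z →
          ∃ p : G.Walk y z, IsIndPath G p ∧ Even p.length ∧ interiorSet p ⊆ A) ∧
        (∃ a ∈ A, G.Adj x a)

/-- `G` admits a clique cutset. -/
def HasCliqueCutset (G : SimpleGraph V) : Prop :=
  ∃ X : Set V, G.IsClique X ∧ RemovalDisconnects G X

/-- Vertices of the Petersen graph: 2-element subsets of a 5-element set. -/
abbrev KVert : Type := {s : Finset (Fin 5) // s.card = 2}

/-- The Petersen graph, as the Kneser graph on 2-element subsets of a 5-element set. -/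
def petersen : SimpleGraph KVert where
  Adj a b := Disjoint (a : Finset (Fin 5)) (b : Finset (Fin 5))
  symm := ⟨fun a b h => h.symm⟩
  loopless := by
    constructor
    intro a h
    rw [disjoint_self] at h
    have h2 := a.2
    simp [h] at h2

def pA : KVert := ⟨{0, 1}, by decide⟩
def pB : KVert := ⟨{2, 3}, by decide⟩

/-- The Petersen graph minus one edge. -/
def petersen0 : SimpleGraph KVert := petersen.deleteEdges {s(pA, pB)}

/-- The Petersen graph minus one vertex. -/
def petersen1 : SimpleGraph {x : KVert // x ≠ pA} := petersen.induce {x : KVert | x ≠ pA}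

/-- The Petersen graph minus two adjacent vertices. -/
def petersen2 : SimpleGraph {x : KVert // x ≠ pA ∧ x ≠ pB} :=
  petersen.induce {x : KVert | x ≠ pA ∧ x ≠ pB}

/-- Two nonadjacent vertices are *linked*: joined by two induced paths, both of length at
least three, of different parity. -/
def Linked (H : SimpleGraph V) (s t : V) : Prop :=
  ∃ (p q : H.Walk s t), IsIndPath H p ∧ IsIndPath H q ∧
    3 ≤ p.length ∧ 3 ≤ q.length ∧ p.length % 2 ≠ q.length % 2

/-- Two vertices are *odd-linked*: joined by an induced path of odd length at least five. -/
def OddLinked (H : SimpleGraph V) (s t : V) : Prop :=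
  ∃ p : H.Walk s t, IsIndPath H p ∧ Odd p.length ∧ 5 ≤ p.length

/-- A *jump* over a hole with vertex set `C`: an induced path whose ends are distinct,
nonadjacent vertices of `C` and whose other vertices avoid `C`. -/
def IsJump (G : SimpleGraph V) (C : Set V) {s t : V} (P : G.Walk s t) : Prop :=
  IsIndPath G P ∧ s ∈ C ∧ t ∈ C ∧ s ≠ t ∧ ¬ G.Adj s t ∧
    ∀ x ∈ P.support, x ∈ C → x = s ∨ x = t

/-- A jump *across* the vertex `c` of `C`. -/
def IsJumpAcross (G : SimpleGraph V) (C : Set V) {s t : V} (P : G.Walk s t) (c : V) : Prop :=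
  IsJump G C P ∧ c ∈ C ∧ G.Adj c s ∧ G.Adj c t

/-- A *local* jump: no vertex of `C` other than `c, s, t` has a neighbour in the interior. -/
def IsLocalJump (G : SimpleGraph V) (C : Set V) {s t : V} (P : G.Walk s t) : Prop :=
  IsJump G C P ∧ ∃ c : V, c ∈ C ∧ G.Adj c s ∧ G.Adj c t ∧
    ∀ x ∈ C, x ≠ c → x ≠ s → x ≠ t → ∀ y ∈ interiorSet P, ¬ G.Adj x y

/-- A *short* jump: a jump of length three. -/
def IsShortJump (G : SimpleGraph V) (C : Set V) {s t : V} (P : G.Walk s t) : Prop :=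
  IsJump G C P ∧ P.length = 3

/-- `G` is three-connected. -/
def ThreeConnected (G : SimpleGraph V) : Prop :=
  4 ≤ Nat.card V ∧ ∀ S : Set V, S.ncard < 3 → (G.induce Sᶜ).Connected


/-! ### Auxiliary material -/

instance : DecidableRel petersen.Adj := fun a b => by
  unfold petersen; infer_instance

set_option synthInstance.maxSize 2000 in
lemma pet_common : ∀ a b : KVert, a ≠ b →
    petersen.Adj a b ∨ ∃ q, petersen.Adj q a ∧ petersen.Adj q b := by decide

set_option synthInstance.maxSize 2000 in
lemma pet_unique : ∀ s t p q : KVert, s ≠ t → ¬ petersen.Adj s t → petersen.Adj p s →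
    petersen.Adj p t → petersen.Adj q s → petersen.Adj q t → p = q := by decide

set_option synthInstance.maxSize 2000 in
lemma pet_far : ∀ s t : KVert, ∃ r, r ≠ s ∧ r ≠ t ∧ ¬ petersen.Adj r s ∧ ¬ petersen.Adj r t := by
  decide

set_option synthInstance.maxSize 2000 in
set_option maxHeartbeats 2000000 in
lemma pet_R3 : ∀ s t p : KVert, (s ≠ t ∧ ¬ petersen.Adj s t ∧ petersen.Adj p s ∧ petersen.Adj p t) →
    (∃ a b : KVert, petersen.Adj t a ∧ petersen.Adj a b ∧ petersen.Adj b s ∧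
      ¬ petersen.Adj t b ∧ ¬ petersen.Adj a s ∧ t ≠ b ∧ a ≠ s ∧ a ≠ p ∧ b ≠ p) := by decide

set_option synthInstance.maxSize 2000 in
set_option maxHeartbeats 2000000 in
lemma pet_R4 : ∀ s t p : KVert, (s ≠ t ∧ ¬ petersen.Adj s t ∧ petersen.Adj p s ∧ petersen.Adj p t) →
    (∃ a b c : KVert, petersen.Adj t a ∧ petersen.Adj a b ∧ petersen.Adj b c ∧ petersen.Adj c s ∧
      ¬ petersen.Adj t b ∧ ¬ petersen.Adj t c ∧ ¬ petersen.Adj a c ∧ ¬ petersen.Adj a s ∧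
      ¬ petersen.Adj b s ∧ t ≠ b ∧ t ≠ c ∧ a ≠ c ∧ a ≠ s ∧ b ≠ s ∧
      a ≠ p ∧ b ≠ p ∧ c ≠ p) := by decide

lemma length_zero_eq {G : SimpleGraph V} {x y : V} (w : G.Walk x y) (h : w.length = 0) :
    x = y := by
  cases w with
  | nil => rfl
  | cons h' w' => simp at h

lemma length_one_mem_edges {G : SimpleGraph V} {x y : V} (w : G.Walk x y) (h : w.length = 1) :
    s(x, y) ∈ w.edges := by
  cases w with
  | nil => simp at h
  | cons h' w' =>
    cases w' with
    | nil => simp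
    | cons h'' w'' => simp at h

lemma cycle3 {G : SimpleGraph V} {a b c : V} (hab : G.Adj a b) (hbc : G.Adj b c)
    (hca : G.Adj c a) : ∃ w : G.Walk a a, w.IsCycle ∧ w.length = 3 := by
  refine ⟨Walk.cons hab (Walk.cons hbc (Walk.cons hca Walk.nil)), ?_, by simp⟩
  have h1 := hab.ne
  have h2 := hbc.ne
  have h3 := hca.ne
  have h1' := h1.symm; have h2' := h2.symm; have h3' := h3.symm
  rw [Walk.isCycle_def]
  refine ⟨?_, by simp, ?_⟩
  · rw [Walk.isTrail_def]; simp [Sym2.eq_iff]; tauto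
  · simp; tauto

lemma cycle4 {G : SimpleGraph V} {a b c d : V} (hab : G.Adj a b) (hbc : G.Adj b c)
    (hcd : G.Adj c d) (hda : G.Adj d a) (hac : a ≠ c) (hbd : b ≠ d) :
    ∃ w : G.Walk a a, w.IsCycle ∧ w.length = 4 := by
  refine ⟨Walk.cons hab (Walk.cons hbc (Walk.cons hcd (Walk.cons hda Walk.nil))), ?_, by simp⟩
  have h1 := hab.ne
  have h2 := hbc.ne
  have h3 := hcd.ne
  have h4 := hda.ne
  have h1' := h1.symm; have h2' := h2.symm; have h3' := h3.symm; have h4' := h4.symm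
  have hac' := hac.symm; have hbd' := hbd.symm
  rw [Walk.isCycle_def]
  refine ⟨?_, by simp, ?_⟩
  · rw [Walk.isTrail_def]; simp [Sym2.eq_iff]; tauto
  · simp; tauto

/-- A vertex outside the Petersen copy has at most one neighbour inside it. -/
lemma unique_att {G : SimpleGraph V} (hG : IsPentagraph G) (η : petersen ↪g G) {x : V}
    (hx : ∀ u, x ≠ η u) {u1 u2 : KVert} (h1 : G.Adj x (η u1)) (h2 : G.Adj x (η u2)) :
    u1 = u2 := by
  by_contra hne
  rcases pet_common u1 u2 hne with hadj | ⟨q, hq1, hq2⟩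
  · obtain ⟨w, hw, hl⟩ := cycle3 h1 (η.map_rel_iff.mpr hadj) h2.symm
    have := hG.1 _ w hw
    omega
  · obtain ⟨w, hw, hl⟩ := cycle4 h1 (η.map_rel_iff.mpr hq1.symm) (η.map_rel_iff.mpr hq2) h2.symm
      (hx q) (fun h => hne (η.injective h))
    have := hG.1 _ w hw
    omega

set_option maxHeartbeats 4000000 in
/-- No two distinct nonadjacent vertices of the Petersen copy are attached to
the same component outside it. -/
lemma nojump {G : SimpleGraph V} (hG : IsPentagraph G) (η : petersen ↪g G) (A : Set V)
    (hA1 : ∀ x ∈ A, x ∉ Set.range ⇑η)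
    (hA2 : ∀ a ∈ A, ∀ a' ∈ A, ∃ w : G.Walk a a', ∀ z ∈ w.support, z ∈ A)
    (s t : KVert) (hst : ¬ petersen.Adj s t) (hne : s ≠ t)
    (has : ∃ a ∈ A, G.Adj (η s) a) (hat : ∃ a ∈ A, G.Adj (η t) a) : False := by
  classical
  have hinj : Function.Injective ⇑η := η.injective
  set Pred : ℕ → Prop := fun n => ∃ (s' t' : KVert) (w : G.Walk (η s') (η t')),
    ¬ petersen.Adj s' t' ∧ s' ≠ t' ∧ (∀ z ∈ w.support, z ≠ η s' → z ≠ η t' → z ∈ A) ∧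
    w.length = n with hPredDef
  have hex : ∃ n, Pred n := by
    obtain ⟨a, haA, hadja⟩ := has
    obtain ⟨a', haA', hadja'⟩ := hat
    obtain ⟨w0, hw0⟩ := hA2 a haA a' haA'
    refine ⟨_, s, t, Walk.cons hadja (w0.concat hadja'.symm), hst, hne, ?_, rfl⟩
    intro z hz hzs hzt
    rw [Walk.support_cons] at hz
    rcases List.mem_cons.mp hz with rfl | hz'
    · exact absurd rfl hzs
    · rw [Walk.support_concat, List.mem_append] at hz'
      rcases hz' with h | h
      · exact hw0 z h
      · rw [List.mem_singleton] at h; exact absurd h hzt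
  set n : ℕ := Nat.find hex with hndef
  have hmin : ∀ m, m < n → ¬ Pred m := fun m hm => Nat.find_min hex hm
  obtain ⟨s', t', q0, hst', hne', hint0, hlen0⟩ := Nat.find_spec hex
  clear hst hne has hat
  obtain ⟨q, hqpath, hint, hqlen⟩ : ∃ q : G.Walk (η s') (η t'), q.IsPath ∧
      (∀ z ∈ q.support, z ≠ η s' → z ≠ η t' → z ∈ A) ∧ q.length = n := by
    refine ⟨q0.bypass, Walk.bypass_isPath q0, ?_, ?_⟩
    · intro z hz hzs hzt
      exact hint0 z (Walk.support_bypass_subset q0 hz) hzs hzt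
    · have h1 : q0.bypass.length ≤ n := le_trans (Walk.length_bypass_le q0) (le_of_eq hlen0)
      have h2 : n ≤ q0.bypass.length := Nat.find_min' hex
        ⟨s', t', q0.bypass, hst', hne', fun z hz hzs hzt =>
          hint0 z (Walk.support_bypass_subset q0 hz) hzs hzt, rfl⟩
      omega
  have hEne : η s' ≠ η t' := fun h => hne' (hinj h)
  have hn2 : 2 ≤ n := by
    by_contra hlt
    push_neg at hlt
    interval_cases hn : n
    · exact hne' (hinj (length_zero_eq q hqlen))
    · exact hst' (η.map_rel_iff.mp (Walk.adj_of_mem_edges q (length_one_mem_edges q hqlen)))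
  -- chordality of q
  have hind : ∀ x ∈ q.support, ∀ y ∈ q.support, G.Adj x y → s(x, y) ∈ q.edges := by
    intro x hx y hy hxy
    by_contra he
    obtain ⟨q1, q2, rfl⟩ := Walk.mem_support_iff_exists_append.mp hx
    rcases (Walk.mem_support_append_iff _ _).mp hy with hy1 | hy2
    · -- y occurs in q1, before x
      obtain ⟨q11, q12, rfl⟩ := Walk.mem_support_iff_exists_append.mp hy1
      have h0 : q12.length ≠ 0 := fun h => hxy.ne (length_zero_eq q12 h).symm
      have h1 : q12.length ≠ 1 := by
        intro h
        apply he
        have := length_one_mem_edges q12 h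
        rw [Sym2.eq_swap]
        rw [Walk.edges_append, Walk.edges_append, List.mem_append, List.mem_append]
        exact Or.inl (Or.inr this)
      have hP : Pred (q11.length + (q2.length + 1)) := by
        refine ⟨s', t', q11.append (Walk.cons hxy.symm q2), hst', hne', ?_, by
          rw [Walk.length_append]; simp⟩
        intro z hz hzs hzt
        rcases (Walk.mem_support_append_iff _ _).mp hz with h | h
        · refine hint z ?_ hzs hzt
          rw [Walk.mem_support_append_iff, Walk.mem_support_append_iff]
          exact Or.inl (Or.inl h)
        · rw [Walk.support_cons] at h
          rcases List.mem_cons.mp h with rfl | h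
          · refine hint z ?_ hzs hzt
            rw [Walk.mem_support_append_iff, Walk.mem_support_append_iff]
            exact Or.inl (Or.inr (Walk.start_mem_support q12))
          · refine hint z ?_ hzs hzt
            rw [Walk.mem_support_append_iff]
            exact Or.inr h
      refine hmin _ ?_ hP
      have : ((q11.append q12).append q2).length = n := hqlen
      rw [Walk.length_append, Walk.length_append] at this
      omega
    · -- y occurs in q2, after x
      obtain ⟨q21, q22, rfl⟩ := Walk.mem_support_iff_exists_append.mp hy2
      have h0 : q21.length ≠ 0 := fun h => hxy.ne (length_zero_eq q21 h)
      have h1 : q21.length ≠ 1 := by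
        intro h
        apply he
        have := length_one_mem_edges q21 h
        rw [Walk.edges_append, Walk.edges_append, List.mem_append, List.mem_append]
        exact Or.inr (Or.inl this)
      have hP : Pred (q1.length + (q22.length + 1)) := by
        refine ⟨s', t', q1.append (Walk.cons hxy q22), hst', hne', ?_, by
          rw [Walk.length_append]; simp⟩
        intro z hz hzs hzt
        rcases (Walk.mem_support_append_iff _ _).mp hz with h | h
        · refine hint z ?_ hzs hzt
          rw [Walk.mem_support_append_iff]
          exact Or.inl h
        · rw [Walk.support_cons] at h
          rcases List.mem_cons.mp h with rfl | h
          · refine hint z ?_ hzs hzt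
            rw [Walk.mem_support_append_iff]
            exact Or.inl (Walk.end_mem_support q1)
          · refine hint z ?_ hzs hzt
            rw [Walk.mem_support_append_iff, Walk.mem_support_append_iff]
            exact Or.inr (Or.inr h)
      refine hmin _ ?_ hP
      have : (q1.append (q21.append q22)).length = n := hqlen
      rw [Walk.length_append, Walk.length_append] at this
      omega
  -- neighbours of interior vertices in the Petersen copy
  have hP3 : ∀ x ∈ q.support, x ≠ η s' → x ≠ η t' → ∀ u, G.Adj x (η u) →
      u = s' ∨ u = t' ∨ (petersen.Adj u s' ∧ petersen.Adj u t') := by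
    intro x hx hxs hxt u hxu
    have hxA : x ∈ A := hint x hx hxs hxt
    have hxr : ∀ u', x ≠ η u' := fun u' h => hA1 x hxA ⟨u', h.symm⟩
    obtain ⟨q1, q2, rfl⟩ := Walk.mem_support_iff_exists_append.mp hx
    have hlen12 : q1.length + q2.length = n := by
      rw [← hqlen, Walk.length_append]
    have ha1 : q1.length ≠ 0 := fun h => hxs (length_zero_eq q1 h).symm
    have hb1 : q2.length ≠ 0 := fun h => hxt (length_zero_eq q2 h)
    by_cases hb2 : q2.length = 1
    · have hxt' : G.Adj x (η t') := Walk.adj_of_mem_edges q2 (length_one_mem_edges q2 hb2)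
      exact Or.inr (Or.inl (unique_att hG η hxr hxu hxt'))
    by_cases ha2 : q1.length = 1
    · have hsx : G.Adj (η s') x := Walk.adj_of_mem_edges q1 (length_one_mem_edges q1 ha2)
      exact Or.inl (unique_att hG η hxr hxu hsx.symm)
    have hnd := hqpath.support_nodup
    rw [Walk.support_append] at hnd
    have hts : η t' ∉ q1.support := by
      intro hmem
      have h2 : η t' ∈ q2.support.tail := by
        have he2 : η t' ∈ q2.support := Walk.end_mem_support q2
        rw [Walk.support_eq_cons q2] at he2
        rcases List.mem_cons.mp he2 with h | h
        · exact absurd h hxt.symm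
        · exact h
      exact (List.disjoint_of_nodup_append hnd) hmem h2
    have hss : η s' ∉ q2.support := by
      intro hmem
      have h2 : η s' ∈ q2.support.tail := by
        rw [Walk.support_eq_cons q2] at hmem
        rcases List.mem_cons.mp hmem with h | h
        · exact absurd h.symm hxs
        · exact h
      exact (List.disjoint_of_nodup_append hnd) (Walk.start_mem_support q1) h2
    have key1 : petersen.Adj s' u ∨ s' = u := by
      by_contra hcon
      push_neg at hcon
      obtain ⟨hnadj, hneu⟩ := hcon
      have hP : Pred (q1.length + 1) := by
        refine ⟨s', u, q1.concat hxu, hnadj, hneu, ?_, by rw [Walk.length_concat]⟩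
        intro z hz hzs hzu
        rw [Walk.support_concat, List.mem_append] at hz
        rcases hz with hz1 | hz1
        · exact hint z (by rw [Walk.mem_support_append_iff]; exact Or.inl hz1) hzs
            (fun h => hts (h ▸ hz1))
        · rw [List.mem_singleton] at hz1; exact absurd hz1 hzu
      exact hmin _ (by omega) hP
    have key2 : petersen.Adj u t' ∨ u = t' := by
      by_contra hcon
      push_neg at hcon
      obtain ⟨hnadj, hneu⟩ := hcon
      have hP : Pred (q2.length + 1) := by
        refine ⟨u, t', Walk.cons hxu.symm q2, hnadj, hneu, ?_, by simp⟩
        intro z hz hzu hzt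
        rw [Walk.support_cons] at hz
        rcases List.mem_cons.mp hz with rfl | hz1
        · exact absurd rfl hzu
        · exact hint z (by rw [Walk.mem_support_append_iff]; exact Or.inr hz1)
            (fun h => hss (h ▸ hz1)) hzt
      exact hmin _ (by omega) hP
    rcases key1 with h1 | rfl
    · rcases key2 with h2 | rfl
      · exact Or.inr (Or.inr ⟨h1.symm, h2⟩)
      · exact Or.inr (Or.inl rfl)
    · exact Or.inl rfl
  -- a common neighbour of s' and t'
  obtain ⟨p, hp1, hp2⟩ : ∃ p, petersen.Adj p s' ∧ petersen.Adj p t' := by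
    rcases pet_common s' t' hne' with h | h
    · exact absurd h hst'
    · exact h
  have hP3' : ∀ x ∈ q.support, x ≠ η s' → x ≠ η t' → ∀ u, G.Adj x (η u) →
      u = s' ∨ u = t' ∨ u = p := by
    intro x hx h1 h2 u h3
    rcases hP3 x hx h1 h2 u h3 with h | h | ⟨hu1, hu2⟩
    · exact Or.inl h
    · exact Or.inr (Or.inl h)
    · exact Or.inr (Or.inr (pet_unique s' t' u p hne' hst' hu1 hu2 hp1 hp2))
  -- n is at least 3
  have hn3 : 3 ≤ n := by
    by_contra hcon
    push_neg at hcon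
    have hn : n = 2 := by omega
    have hlq : 1 ≤ q.length := by omega
    have hadj1 : G.Adj (η s') (q.getVert 1) := by
      have := q.adj_getVert_succ (by omega : 0 < q.length)
      rwa [Walk.getVert_zero] at this
    set x1 := q.getVert 1 with hx1def
    have hx1mem : x1 ∈ q.support := by
      rw [Walk.mem_support_iff_exists_getVert]
      exact ⟨1, rfl, by omega⟩
    have hx1s : x1 ≠ η s' := hadj1.ne'
    have hx1t : x1 ≠ η t' := by
      intro h
      rw [h] at hadj1
      exact hst' (η.map_rel_iff.mp hadj1)
    have hx1A : x1 ∈ A := hint x1 hx1mem hx1s hx1t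
    have hx1r : ∀ u', x1 ≠ η u' := fun u' h => hA1 x1 hx1A ⟨u', h.symm⟩
    obtain ⟨q1, q2, hq12⟩ := Walk.mem_support_iff_exists_append.mp hx1mem
    have hlens : q1.length + q2.length = n := by
      rw [← hqlen, hq12, Walk.length_append]
    have ha1 : q1.length ≠ 0 := fun h => hx1s (length_zero_eq q1 h).symm
    have hb1 : q2.length ≠ 0 := fun h => hx1t (length_zero_eq q2 h)
    have hb2 : q2.length = 1 := by omega
    have hadjt : G.Adj x1 (η t') := Walk.adj_of_mem_edges q2 (length_one_mem_edges q2 hb2)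
    exact hne' (unique_att hG η hx1r hadj1.symm hadjt)
  -- gluing lemma
  have hglue : ∀ (R : G.Walk (η t') (η s')), R.IsPath →
      (∀ z ∈ R.support, ∃ u, z = η u) →
      (∀ x ∈ R.support, ∀ y ∈ R.support, G.Adj x y → s(x, y) ∈ R.edges) →
      (∀ z ∈ R.support, z ≠ η s' → z ≠ η t' → ∀ u, z = η u → u ≠ p) →
      Odd (n + R.length) → n + R.length = 5 := by
    intro R hRpath hRsupp hRind hRavoid hodd
    set C : G.Walk (η s') (η s') := q.append R with hCdef
    have hClen : C.length = n + R.length := by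
      rw [hCdef, Walk.length_append, hqlen]
    have hsupq_range : ∀ z ∈ q.support, ∀ u, z = η u → u = s' ∨ u = t' := by
      intro z hz u hzu
      by_cases h1 : z = η s'
      · exact Or.inl (hinj (h1 ▸ hzu ▸ rfl : η u = η s'))
      by_cases h2 : z = η t'
      · exact Or.inr (hinj (h2 ▸ hzu ▸ rfl : η u = η t'))
      · exact absurd ⟨u, hzu.symm⟩ (hA1 z (hint z hz h1 h2))
    have hCsupport : C.support = q.support ++ R.support.tail := Walk.support_append q R
    have hedgedisj : ∀ e ∈ q.edges, e ∉ R.edges := by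
      intro e he1 he2
      induction e using Sym2.ind with
      | _ x y =>
        have hx : x ∈ q.support := Walk.fst_mem_support_of_mem_edges q he1
        have hy : y ∈ q.support := Walk.snd_mem_support_of_mem_edges q he1
        have hxR : x ∈ R.support := Walk.fst_mem_support_of_mem_edges R he2
        have hyR : y ∈ R.support := Walk.snd_mem_support_of_mem_edges R he2
        obtain ⟨u, rfl⟩ := hRsupp x hxR
        obtain ⟨v, rfl⟩ := hRsupp y hyR
        have hadj : G.Adj (η u) (η v) := Walk.adj_of_mem_edges q he1
        rcases hsupq_range _ hx u rfl with rfl | rfl <;>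
          rcases hsupq_range _ hy v rfl with rfl | rfl
        · exact hadj.ne rfl
        · exact hst' (η.map_rel_iff.mp hadj)
        · exact hst' (η.map_rel_iff.mp hadj.symm)
        · exact hadj.ne rfl
    have hcyc : C.IsCycle := by
      rw [Walk.isCycle_def]
      refine ⟨?_, ?_, ?_⟩
      · rw [Walk.isTrail_def, hCdef, Walk.edges_append]
        exact List.Nodup.append (hqpath.isTrail.edges_nodup) (hRpath.isTrail.edges_nodup)
          hedgedisj
      · intro hnil
        have h0 := congrArg Walk.length hnil
        rw [hClen] at h0
        have h0' : n + R.length = 0 := h0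
        omega
      · rw [hCsupport, Walk.support_eq_cons q, List.cons_append, List.tail_cons]
        have hq_nodup := hqpath.support_nodup
        rw [Walk.support_eq_cons q] at hq_nodup
        have hR_nodup := hRpath.support_nodup
        rw [Walk.support_eq_cons R] at hR_nodup
        refine List.Nodup.append (List.Nodup.of_cons hq_nodup) (List.Nodup.of_cons hR_nodup) ?_
        intro z hz1 hz2
        have hzq : z ∈ q.support := by
          rw [Walk.support_eq_cons q]; exact List.mem_cons_of_mem _ hz1
        have hzR : z ∈ R.support := by
          rw [Walk.support_eq_cons R]; exact List.mem_cons_of_mem _ hz2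
        obtain ⟨u, rfl⟩ := hRsupp z hzR
        have hzs : η u ≠ η s' := by
          intro h
          rw [h] at hz1
          exact (List.nodup_cons.mp hq_nodup).1 hz1
        have hzt : η u ≠ η t' := by
          intro h
          rw [h] at hz2
          exact (List.nodup_cons.mp hR_nodup).1 hz2
        rcases hsupq_range _ hzq u rfl with rfl | rfl
        · exact hzs rfl
        · exact hzt rfl
    have hindC : ∀ x ∈ C.support, ∀ y ∈ C.support, G.Adj x y → s(x, y) ∈ C.edges := by
      have hCedges : C.edges = q.edges ++ R.edges := Walk.edges_append q R
      have hmemC : ∀ z ∈ C.support, z ∈ q.support ∨ z ∈ R.support := by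
        intro z hz
        rw [hCsupport, List.mem_append] at hz
        rcases hz with h | h
        · exact Or.inl h
        · exact Or.inr (List.mem_of_mem_tail h)
      intro x hx y hy hxy
      rw [hCedges, List.mem_append]
      by_cases hxq : x ∈ q.support <;> by_cases hyq : y ∈ q.support
      · exact Or.inl (hind x hxq y hyq hxy)
      · -- y ∉ q.support, so y is an interior vertex of R
        have hyR : y ∈ R.support := (hmemC y hy).resolve_left hyq
        by_cases hxR : x ∈ R.support
        · exact Or.inr (hRind x hxR y hyR hxy)
        · exfalso
          have hxs : x ≠ η s' := fun h => hxR (by rw [h]; exact Walk.end_mem_support R)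
          have hxt : x ≠ η t' := fun h => hxR (by rw [h]; exact Walk.start_mem_support R)
          obtain ⟨u, rfl⟩ := hRsupp y hyR
          have hys : (η u : V) ≠ η s' := fun h => hyq (by rw [h]; exact Walk.start_mem_support q)
          have hyt : (η u : V) ≠ η t' := fun h => hyq (by rw [h]; exact Walk.end_mem_support q)
          rcases hP3' x hxq hxs hxt u hxy with rfl | rfl | rfl
          · exact hys rfl
          · exact hyt rfl
          · exact hRavoid _ hyR hys hyt u rfl rfl
      · -- x ∉ q.support
        have hxR : x ∈ R.support := (hmemC x hx).resolve_left hxq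
        by_cases hyR : y ∈ R.support
        · exact Or.inr (hRind x hxR y hyR hxy)
        · exfalso
          have hys : y ≠ η s' := fun h => hyR (by rw [h]; exact Walk.end_mem_support R)
          have hyt : y ≠ η t' := fun h => hyR (by rw [h]; exact Walk.start_mem_support R)
          obtain ⟨u, rfl⟩ := hRsupp x hxR
          have hxs : (η u : V) ≠ η s' := fun h => hxq (by rw [h]; exact Walk.start_mem_support q)
          have hxt : (η u : V) ≠ η t' := fun h => hxq (by rw [h]; exact Walk.end_mem_support q)
          rcases hP3' y hyq hys hyt u hxy.symm with rfl | rfl | rfl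
          · exact hxs rfl
          · exact hxt rfl
          · exact hRavoid _ hxR hxs hxt u rfl rfl
      · -- both in R
        have hxR : x ∈ R.support := (hmemC x hx).resolve_left hxq
        have hyR : y ∈ R.support := (hmemC y hy).resolve_left hyq
        exact Or.inr (hRind x hxR y hyR hxy)
    have h5 := hG.2 _ C ⟨hcyc, hindC⟩ (hClen ▸ hodd)
    rw [hClen] at h5
    exact h5
  -- build the two Petersen paths
  obtain ⟨a3, b3, h3ta, h3ab, h3bs, h3ntb, h3nas, h3tb, h3as, h3ap, h3bp⟩ :=
    pet_R3 s' t' p ⟨hne', hst', hp1, hp2⟩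
  obtain ⟨a4, b4, c4, h4ta, h4ab, h4bc, h4cs, h4ntb, h4ntc, h4nac, h4nas, h4nbs,
    h4tb, h4tc, h4ac, h4as, h4bs, h4ap, h4bp, h4cp⟩ := pet_R4 s' t' p ⟨hne', hst', hp1, hp2⟩
  have hmap : ∀ {u v : KVert}, petersen.Adj u v → G.Adj (η u) (η v) :=
    fun h => η.map_rel_iff.mpr h
  have hinjne : ∀ {u v : KVert}, u ≠ v → (η u : V) ≠ η v := fun h hh => h (hinj hh)
  rcases Nat.even_or_odd n with hev | hod
  · -- use the path of length 3
    set R : G.Walk (η t') (η s') :=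
      Walk.cons (hmap h3ta) (Walk.cons (hmap h3ab) (Walk.cons (hmap h3bs) Walk.nil)) with hRdef
    have hRsupp : R.support = [η t', η a3, η b3, η s'] := by simp [hRdef]
    have hRedges : R.edges = [s(η t', η a3), s(η a3, η b3), s(η b3, η s')] := by simp [hRdef]
    have hRlen : R.length = 3 := by simp [hRdef]
    have h1 := hglue R ?_ ?_ ?_ ?_ ?_
    · rw [hRlen] at h1; omega
    · rw [Walk.isPath_def, hRsupp]
      have d1 := hinjne h3ta.ne
      have d2 := hinjne h3tb
      have d3 := hEne.symm
      have d4 := hinjne h3ab.ne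
      have d5 := hinjne h3as
      have d6 := hinjne h3bs.ne
      simp only [List.nodup_cons, List.mem_cons, List.not_mem_nil, List.mem_singleton,
        List.nodup_nil, and_true, not_or, or_false]
      tauto
    · intro z hz
      rw [hRsupp] at hz
      simp only [List.mem_cons, List.not_mem_nil, or_false] at hz
      rcases hz with rfl | rfl | rfl | rfl
      · exact ⟨t', rfl⟩
      · exact ⟨a3, rfl⟩
      · exact ⟨b3, rfl⟩
      · exact ⟨s', rfl⟩
    · intro x hx y hy hxy
      rw [hRsupp] at hx hy
      rw [hRedges]
      have hnadj1 : ¬ petersen.Adj t' b3 := h3ntb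
      have hnadj2 : ¬ petersen.Adj b3 t' := fun h => h3ntb h.symm
      have hnadj3 : ¬ petersen.Adj a3 s' := h3nas
      have hnadj4 : ¬ petersen.Adj s' a3 := fun h => h3nas h.symm
      have hnadj5 : ¬ petersen.Adj t' s' := fun h => hst' h.symm
      have hnadj6 : ¬ petersen.Adj s' t' := hst'
      simp only [List.mem_cons, List.not_mem_nil, List.mem_singleton, or_false] at hx hy
      rcases hx with rfl | rfl | rfl | rfl <;> rcases hy with rfl | rfl | rfl | rfl <;>
        first
          | exact absurd rfl hxy.ne
          | exact absurd (η.map_rel_iff.mp hxy) (by assumption)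
          | (simp only [List.mem_cons, List.not_mem_nil, List.mem_singleton, or_false,
              Sym2.eq_iff]; tauto)
    · intro z hz hzs hzt u hzu hup
      rw [hRsupp] at hz
      simp only [List.mem_cons, List.not_mem_nil, or_false] at hz
      rcases hz with rfl | rfl | rfl | rfl
      · exact hzt rfl
      · exact h3ap ((hinj hzu).trans hup)
      · exact h3bp ((hinj hzu).trans hup)
      · exact hzs rfl
    · rw [hRlen]
      obtain ⟨k, hk⟩ := hev
      exact ⟨k + 1, by omega⟩
  · -- use the path of length 4
    set R : G.Walk (η t') (η s') :=
      Walk.cons (hmap h4ta) (Walk.cons (hmap h4ab) (Walk.cons (hmap h4bc)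
        (Walk.cons (hmap h4cs) Walk.nil))) with hRdef
    have hRsupp : R.support = [η t', η a4, η b4, η c4, η s'] := by simp [hRdef]
    have hRedges : R.edges = [s(η t', η a4), s(η a4, η b4), s(η b4, η c4), s(η c4, η s')] := by
      simp [hRdef]
    have hRlen : R.length = 4 := by simp [hRdef]
    have h1 := hglue R ?_ ?_ ?_ ?_ ?_
    · rw [hRlen] at h1; omega
    · rw [Walk.isPath_def, hRsupp]
      have d1 := hinjne h4ta.ne
      have d2 := hinjne h4tb
      have d3 := hinjne h4tc
      have d4 := hEne.symm
      have d5 := hinjne h4ab.ne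
      have d6 := hinjne h4ac
      have d7 := hinjne h4as
      have d8 := hinjne h4bc.ne
      have d9 := hinjne h4bs
      have d10 := hinjne h4cs.ne
      simp only [List.nodup_cons, List.mem_cons, List.not_mem_nil, List.mem_singleton,
        List.nodup_nil, and_true, not_or, or_false]
      tauto
    · intro z hz
      rw [hRsupp] at hz
      simp only [List.mem_cons, List.not_mem_nil, or_false] at hz
      rcases hz with rfl | rfl | rfl | rfl | rfl
      · exact ⟨t', rfl⟩
      · exact ⟨a4, rfl⟩
      · exact ⟨b4, rfl⟩
      · exact ⟨c4, rfl⟩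
      · exact ⟨s', rfl⟩
    · intro x hx y hy hxy
      rw [hRsupp] at hx hy
      rw [hRedges]
      have hnadj1 : ¬ petersen.Adj t' b4 := h4ntb
      have hnadj2 : ¬ petersen.Adj b4 t' := fun h => h4ntb h.symm
      have hnadj3 : ¬ petersen.Adj t' c4 := h4ntc
      have hnadj4 : ¬ petersen.Adj c4 t' := fun h => h4ntc h.symm
      have hnadj5 : ¬ petersen.Adj a4 c4 := h4nac
      have hnadj6 : ¬ petersen.Adj c4 a4 := fun h => h4nac h.symm
      have hnadj7 : ¬ petersen.Adj a4 s' := h4nas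
      have hnadj8 : ¬ petersen.Adj s' a4 := fun h => h4nas h.symm
      have hnadj9 : ¬ petersen.Adj b4 s' := h4nbs
      have hnadj10 : ¬ petersen.Adj s' b4 := fun h => h4nbs h.symm
      have hnadj11 : ¬ petersen.Adj t' s' := fun h => hst' h.symm
      have hnadj12 : ¬ petersen.Adj s' t' := hst'
      simp only [List.mem_cons, List.not_mem_nil, List.mem_singleton, or_false] at hx hy
      rcases hx with rfl | rfl | rfl | rfl | rfl <;> rcases hy with rfl | rfl | rfl | rfl | rfl <;>
        first
          | exact absurd rfl hxy.ne
          | exact absurd (η.map_rel_iff.mp hxy) (by assumption)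
          | (simp only [List.mem_cons, List.not_mem_nil, List.mem_singleton, or_false,
              Sym2.eq_iff]; tauto)
    · intro z hz hzs hzt u hzu hup
      rw [hRsupp] at hz
      simp only [List.mem_cons, List.not_mem_nil, or_false] at hz
      rcases hz with rfl | rfl | rfl | rfl | rfl
      · exact hzt rfl
      · exact h4ap ((hinj hzu).trans hup)
      · exact h4bp ((hinj hzu).trans hup)
      · exact h4cp ((hinj hzu).trans hup)
      · exact hzs rfl
    · rw [hRlen]
      obtain ⟨k, hk⟩ := hod
      exact ⟨k + 2, by omega⟩

/-- a pentagraph containing the Petersen graph as an induced subgraph. -/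
theorem pentagraph_contains_petersen {V : Type*} [Fintype V] (G : SimpleGraph V)
    (hG : IsPentagraph G) (h : Nonempty (petersen ↪g G)) :
    Nonempty (G ≃g petersen) ∨ HasCliqueCutset G := by
  classical
  obtain ⟨η⟩ := h
  by_cases hsurj : ∀ v : V, v ∈ Set.range ⇑η
  · left
    have hbij : Function.Bijective ⇑η := ⟨η.injective, fun v => hsurj v⟩
    have iso : petersen ≃g G := { toEquiv := Equiv.ofBijective ⇑η hbij, map_rel_iff' := η.map_rel_iff }
    exact ⟨iso.symm⟩
  · right
    push_neg at hsurj
    obtain ⟨v0, hv0⟩ := hsurj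
    set Pc : Set V := (Set.range ⇑η)ᶜ with hPc
    have hv0' : v0 ∈ Pc := hv0
    set A : Set V := {x | ∃ hx : x ∈ Pc, (G.induce Pc).Reachable ⟨v0, hv0'⟩ ⟨x, hx⟩} with hA
    have hA_sub : ∀ x ∈ A, x ∉ Set.range ⇑η := fun x hx => hx.1
    have hv0A : v0 ∈ A := ⟨hv0', Reachable.refl _⟩
    have hA_closed : ∀ a ∈ A, ∀ u, G.Adj a u → u ∉ Set.range ⇑η → u ∈ A := by
      rintro a ⟨ha1, ha2⟩ u hadj hu
      refine ⟨hu, ha2.trans (Adj.reachable ?_)⟩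
      exact hadj
    have hA_conn : ∀ a ∈ A, ∀ a' ∈ A, ∃ w : G.Walk a a', ∀ z ∈ w.support, z ∈ A := by
      have key : ∀ (x y : ↥Pc), (G.induce Pc).Walk x y → x.1 ∈ A →
          ∃ w : G.Walk x.1 y.1, ∀ z ∈ w.support, z ∈ A := by
        intro x y p
        induction p with
        | nil => intro hx; exact ⟨Walk.nil, by simpa using hx⟩
        | @cons a b c h p ih =>
          intro hx
          have hadj : G.Adj a.1 b.1 := h
          have hu : b.1 ∈ A := hA_closed _ hx _ hadj b.2
          obtain ⟨w, hw⟩ := ih hu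
          exact ⟨Walk.cons hadj w, by
            intro z hz
            rw [Walk.support_cons] at hz
            rcases List.mem_cons.mp hz with rfl | hz'
            · exact hx
            · exact hw z hz'⟩
      rintro a ⟨ha1, ha2⟩ a' ⟨ha1', ha2'⟩
      obtain ⟨p⟩ := ha2.symm.trans ha2'
      exact key _ _ p ⟨ha1, ha2⟩
    set N : Set V := {w | w ∈ Set.range ⇑η ∧ ∃ a ∈ A, G.Adj a w} with hN
    have hclique : G.IsClique N := by
      rintro x ⟨⟨u1, rfl⟩, hx2⟩ y ⟨⟨u2, rfl⟩, hy2⟩ hxy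
      by_contra hnadj
      have hneu : u1 ≠ u2 := fun h => hxy (congrArg _ h)
      have hnp : ¬ petersen.Adj u1 u2 := fun h => hnadj (η.map_rel_iff.mpr h)
      obtain ⟨a1, ha1, ha1'⟩ := hx2
      obtain ⟨a2, ha2, ha2'⟩ := hy2
      exact nojump hG η A hA_sub hA_conn u1 u2 hnp hneu ⟨a1, ha1, ha1'.symm⟩ ⟨a2, ha2, ha2'.symm⟩
    -- find a Petersen vertex not in N
    have hr : ∃ r : KVert, η r ∉ N := by
      by_cases hN1 : ∃ w, w ∈ N
      · obtain ⟨w1, hw1⟩ := hN1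
        obtain ⟨s1, rfl⟩ := hw1.1
        by_cases hN2 : ∃ w ∈ N, w ≠ η s1
        · obtain ⟨w2, hw2, hne12⟩ := hN2
          obtain ⟨s2, rfl⟩ := hw2.1
          obtain ⟨r, hr1, hr2, hr3, hr4⟩ := pet_far s1 s2
          refine ⟨r, fun hrN => ?_⟩
          have h1 : G.Adj (η r) (η s1) := hclique hrN hw1 (fun h => hr1 (η.injective h))
          exact hr3 (η.map_rel_iff.mp h1)
        · push_neg at hN2
          obtain ⟨r, hr1, hr2, hr3, hr4⟩ := pet_far s1 s1
          exact ⟨r, fun hrN => hr1 (η.injective (hN2 _ hrN))⟩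
      · exact ⟨pA, fun h => hN1 ⟨_, h⟩⟩
    obtain ⟨r, hrN⟩ := hr
    refine ⟨N, hclique, ⟨v0, fun hv0N : v0 ∈ N => hv0 hv0N.1⟩, ⟨η r, hrN⟩, ?_⟩
    rintro ⟨p⟩
    have key : ∀ (x y : ↥(Nᶜ)), (G.induce Nᶜ).Walk x y → x.1 ∈ A → y.1 ∈ A := by
      intro x y p
      induction p with
      | nil => exact fun hx => hx
      | @cons a b c h p ih =>
        intro hx
        have hadj : G.Adj a.1 b.1 := h
        have hu' : b.1 ∈ A := by
          by_cases hP : b.1 ∈ Set.range ⇑η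
          · exact absurd ⟨hP, a.1, hx, hadj⟩ b.2
          · exact hA_closed _ hx _ hadj hP
        exact ih hu'
    have : (η r : V) ∈ A := key _ _ p hv0A
    exact (hA_sub _ this) ⟨r, rfl⟩
end

section
/- Let G be a triangle-free graph that has at least one edge and admits a clique cutset. Then G admits a strong parity star-cutset. -/
open SimpleGraph

variable {V : Type*}

section Aux

variable {V : Type*}

lemma reachable_induce_of_walk {G : SimpleGraph V} {S : Set V} :
    ∀ {u v : V} (p : G.Walk u v) (h : ∀ z ∈ p.support, z ∈ S),
      (G.induce S).Reachable ⟨u, h u p.start_mem_support⟩ ⟨v, h v p.end_mem_support⟩ := by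
  intro u v p
  induction p with
  | nil => intro h; rfl
  | cons hadj p ih =>
    intro h
    rename_i a b c
    have hb : b ∈ S := h b (by simp [SimpleGraph.Walk.support_cons])
    have h' : ∀ z ∈ p.support, z ∈ S := fun z hz =>
      h z (by simp [SimpleGraph.Walk.support_cons, hz])
    have : (G.induce S).Adj ⟨a, h a (SimpleGraph.Walk.start_mem_support _)⟩ ⟨b, hb⟩ := hadj
    exact (this.reachable).trans (ih h')

lemma walk_support_in {G : SimpleGraph V} {S : Set V} {u v : ↥S}
    (h : (G.induce S).Reachable u v) :
    ∃ p : G.Walk u v, ∀ z ∈ p.support, z ∈ S := by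
  obtain ⟨q⟩ := h
  refine ⟨q.map (SimpleGraph.Embedding.induce S).toHom, ?_⟩
  intro z hz
  replace hz : z ∈ (q.map (SimpleGraph.Embedding.induce S).toHom).support := hz
  rw [SimpleGraph.Walk.support_map, List.mem_map] at hz
  obtain ⟨z', _, rfl⟩ := hz
  exact z'.2

lemma reach_mono {G : SimpleGraph V} {S T : Set V} (hST : S ⊆ T) {u v : ↥S}
    (h : (G.induce S).Reachable u v) :
    (G.induce T).Reachable ⟨u, hST u.2⟩ ⟨v, hST v.2⟩ := by
  obtain ⟨p, hp⟩ := walk_support_in h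
  exact reachable_induce_of_walk p (fun z hz => hST (hp z hz))

lemma comp_of_reach {G : SimpleGraph V} {X : Set V} {w : V} (hw : w ∈ Xᶜ) :
    IsCompOf G X {v : V | ∃ h : v ∈ Xᶜ, (G.induce Xᶜ).Reachable ⟨w, hw⟩ ⟨v, h⟩} := by
  classical
  set A := {v : V | ∃ h : v ∈ Xᶜ, (G.induce Xᶜ).Reachable ⟨w, hw⟩ ⟨v, h⟩} with hA
  have hwA : w ∈ A := ⟨hw, SimpleGraph.Reachable.refl _⟩
  refine ⟨⟨w, hwA⟩, fun v hv => hv.1, ?_, ?_⟩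
  · have hreach : ∀ u : ↥A, (G.induce A).Reachable ⟨w, hwA⟩ u := by
      rintro ⟨u, hu, hru⟩
      obtain ⟨q⟩ := hru
      set p := q.map (SimpleGraph.Embedding.induce Xᶜ).toHom with hp
      have hsupp : ∀ z ∈ p.support, z ∈ A := by
        intro z hz
        rw [hp, SimpleGraph.Walk.support_map, List.mem_map] at hz
        obtain ⟨z', hz', rfl⟩ := hz
        exact ⟨z'.2, ⟨(q.takeUntil z' hz').copy rfl (Subtype.ext rfl)⟩⟩
      exact reachable_induce_of_walk (S := A) p hsupp
    haveI : Nonempty ↥A := ⟨⟨w, hwA⟩⟩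
    exact ⟨fun u v => (hreach u).symm.trans (hreach v)⟩
  · rintro u ⟨huX, hru⟩ w' hw' hadj
    exact ⟨hw', hru.trans (SimpleGraph.Adj.reachable
      (by exact hadj : (G.induce Xᶜ).Adj ⟨u, huX⟩ ⟨w', hw'⟩))⟩

lemma not_reach_of_nbrs {G : SimpleGraph V} {S : Set V} {u v : V} (hu : u ∈ Sᶜ) (hv : v ∈ Sᶜ)
    (hne : u ≠ v) (h : ∀ t, G.Adj u t → t ∈ S) :
    ¬ (G.induce Sᶜ).Reachable ⟨u, hu⟩ ⟨v, hv⟩ := by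
  rintro ⟨p⟩
  have hnil : ¬ p.Nil := SimpleGraph.Walk.not_nil_of_ne (by simpa [Subtype.ext_iff] using hne)
  have hadj := SimpleGraph.Walk.adj_snd hnil
  exact (p.getVert 1).2 (h _ hadj)

lemma key_lemma {G : SimpleGraph V} {X : Set V} (hd : RemovalDisconnects G X)
    {x : V} (hx : x ∈ X) (hstar : ∀ y ∈ X, y ≠ x → G.Adj x y)
    (hsmall : ∀ y ∈ X, y ≠ x → ∀ z ∈ X, z ≠ x → y = z)
    {w : V} (hw : w ∈ Xᶜ) (hxw : G.Adj x w) :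
    HasStrongParityStarCutset G := by
  refine ⟨X, hd, x, hx, hstar, _, comp_of_reach hw, ?_,
    ⟨w, ⟨hw, SimpleGraph.Reachable.refl _⟩, hxw⟩⟩
  intro y hy hyx z hz hzx hyz
  exact absurd (hsmall y hy hyx z hz hzx) hyz

end Aux

/-- a triangle-free graph with an edge admitting a clique cutset admits a
strong parity star-cutset. -/
theorem clique_cutset_gives_parity_star_cutset {V : Type*} [Fintype V] (G : SimpleGraph V)
    (htri : G.CliqueFree 3) (hedge : ∃ a b : V, G.Adj a b)
    (hcc : HasCliqueCutset G) :
    HasStrongParityStarCutset G := by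
  classical
  obtain ⟨X, hclX, hdX⟩ := hcc
  have hsmall : ∀ x ∈ X, ∀ y ∈ X, y ≠ x → ∀ z ∈ X, z ≠ x → y = z := by
    intro x hx y hy hyx z hz hzx
    by_contra hyz
    exact htri {x, y, z} (SimpleGraph.is3Clique_triple_iff.mpr
      ⟨hclX hx hy (Ne.symm hyx), hclX hx hz (Ne.symm hzx), hclX hy hz hyz⟩)
  by_cases hout : ∃ x ∈ X, ∃ t, G.Adj x t ∧ t ∉ X
  · obtain ⟨x, hx, t, hxt, ht⟩ := hout
    exact key_lemma hdX hx (fun y hy hyx => hclX hx hy (Ne.symm hyx)) (hsmall x hx)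
      (Set.mem_compl ht) hxt
  · push_neg at hout
    obtain ⟨c, d, hcd⟩ := hedge
    obtain ⟨a, b, hab⟩ := hdX
    by_cases hXe : X = ∅
    · subst hXe
      have hdc : (d : V) ≠ c := fun h => G.irrefl (h ▸ hcd)
      have hdm : d ∈ ({c} : Set V)ᶜ := by simpa using hdc
      have lift : ∀ (u v : V) (hu : u ∈ ({c} : Set V)ᶜ) (hv : v ∈ ({c} : Set V)ᶜ),
          (G.induce ({c} : Set V)ᶜ).Reachable ⟨u, hu⟩ ⟨v, hv⟩ →
          (G.induce (∅ : Set V)ᶜ).Reachable ⟨u, by simp⟩ ⟨v, by simp⟩ := by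
        intro u v hu hv h
        exact reach_mono (by intro z _; simp) h
      have hedge' : (G.induce (∅ : Set V)ᶜ).Reachable ⟨c, by simp⟩ ⟨d, by simp⟩ :=
        SimpleGraph.Adj.reachable (by exact hcd)
      have hwit : ∃ (v : V) (hv : v ∈ ({c} : Set V)ᶜ),
          ¬ (G.induce ({c} : Set V)ᶜ).Reachable ⟨d, hdm⟩ ⟨v, hv⟩ := by
        by_contra hcon
        push_neg at hcon
        have key2 : ∀ (u : V) (hu : u ∈ (∅ : Set V)ᶜ),
            (G.induce (∅ : Set V)ᶜ).Reachable ⟨c, by simp⟩ ⟨u, hu⟩ := by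
          intro u hu
          by_cases huc : u = c
          · subst huc; rfl
          · have hum : u ∈ ({c} : Set V)ᶜ := by simpa using huc
            exact hedge'.trans (lift d u hdm hum (hcon u hum))
        have : (G.induce (∅ : Set V)ᶜ).Reachable a b := by
          have h1 := key2 ↑a a.2
          have h2 := key2 ↑b b.2
          have h1' : (G.induce (∅ : Set V)ᶜ).Reachable ⟨c, by simp⟩ a := by
            convert h1 using 2
          have h2' : (G.induce (∅ : Set V)ᶜ).Reachable ⟨c, by simp⟩ b := by
            convert h2 using 2
          exact h1'.symm.trans h2'
        exact hab this
      obtain ⟨v, hv, hnr⟩ := hwit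
      refine key_lemma (X := {c}) ⟨⟨d, hdm⟩, ⟨v, hv⟩, hnr⟩ rfl ?_ ?_ hdm hcd
      · intro y hy hyx
        exact absurd hy hyx
      · intro y hy hyx
        exact absurd hy hyx
    · obtain ⟨x, hx⟩ := Set.nonempty_iff_ne_empty.mpr hXe
      by_cases hy : ∃ y ∈ X, y ≠ x
      · obtain ⟨y, hyX, hyx⟩ := hy
        have hadjxy : G.Adj x y := hclX hx hyX (Ne.symm hyx)
        have hNy : ∀ t, G.Adj y t → t ∈ ({x} : Set V) := by
          intro t hyt
          have htX : t ∈ X := hout y hyX t hyt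
          by_contra htx
          simp only [Set.mem_singleton_iff] at htx
          exact G.irrefl ((hsmall x hx t htX htx y hyX hyx) ▸ hyt)
        have hym : y ∈ ({x} : Set V)ᶜ := by simpa using hyx
        have hax : (a : V) ≠ x := by intro h; exact a.2 (h ▸ hx)
        have ham : (a : V) ∈ ({x} : Set V)ᶜ := by simpa using hax
        have hya : y ≠ ↑a := fun h => a.2 (h ▸ hyX)
        refine key_lemma (X := {x})
          ⟨⟨y, hym⟩, ⟨↑a, ham⟩, not_reach_of_nbrs hym ham hya hNy⟩ rfl ?_ ?_ hym hadjxy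
        · intro z hz hzx; exact absurd hz hzx
        · intro z hz hzx; exact absurd hz hzx
      · push_neg at hy
        have hxiso : ∀ t, ¬ G.Adj x t := by
          intro t hxt
          have := hy t (hout x hx t hxt)
          exact G.irrefl (this ▸ hxt)
        have hcx : c ≠ x := fun h => hxiso d (h ▸ hcd)
        have hdx : (d : V) ≠ x := fun h => hxiso c (h ▸ hcd.symm)
        have hdc : (d : V) ≠ c := fun h => G.irrefl (h ▸ hcd)
        have hxm : x ∈ ({c} : Set V)ᶜ := by simpa using (Ne.symm hcx)
        have hdm : d ∈ ({c} : Set V)ᶜ := by simpa using hdc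
        have hNx : ∀ t, G.Adj x t → t ∈ ({c} : Set V) := fun t hxt => absurd hxt (hxiso t)
        refine key_lemma (X := {c})
          ⟨⟨x, hxm⟩, ⟨d, hdm⟩, not_reach_of_nbrs hxm hdm (Ne.symm hdx) hNx⟩ rfl ?_ ?_ hdm hcd
        · intro z hz hzx; exact absurd hz hzx
        · intro z hz hzx; exact absurd hz hzx
end

section
/- Let G be a pentagraph, let v1-v2-v3 be an induced path of G such that G∖{v1,v2,v3} is disconnected, let A1 be the union of the vertex sets of at least one but not all components of G∖{v1,v2,v3}, and let A2 be the union of the vertex sets of the remaining components. If the induced subgraphs G[A1 ∪ {v1,v2,v3}] and G[A2 ∪ {v1,v2,v3}] both admit proper 3-colourings, then G admits a proper 3-colouring. -/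
open SimpleGraph

variable {V : Type*}

section Helpers

private lemma mapLe_support' {G G' : SimpleGraph V} (h : G ≤ G') {u v : V} (p : G.Walk u v) :
    (p.mapLe h).support = p.support := by
  rw [Walk.mapLe, Walk.support_map,
    show ⇑(Hom.ofLE h) = id from funext fun _ => rfl, List.map_id]

private lemma mapLe_edges' {G G' : SimpleGraph V} (h : G ≤ G') {u v : V} (p : G.Walk u v) :
    (p.mapLe h).edges = p.edges := by
  rw [Walk.mapLe, Walk.edges_map,
    show ⇑(Hom.ofLE h) = id from funext fun _ => rfl, Sym2.map_id, List.map_id]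

private lemma mapLe_length' {G G' : SimpleGraph V} (h : G ≤ G') {u v : V} (p : G.Walk u v) :
    (p.mapLe h).length = p.length := by
  rw [Walk.mapLe, Walk.length_map]

private lemma walk_length_one_edge {G : SimpleGraph V} {u v : V} (w : G.Walk u v)
    (h : w.length = 1) : s(u, v) ∈ w.edges := by
  cases w with
  | nil => simp at h
  | cons h' p =>
    cases p with
    | nil => simp
    | cons h'' q => simp [SimpleGraph.Walk.length_cons] at h

private lemma walk_length_two {G : SimpleGraph V} {u v : V} (w : G.Walk u v)
    (h : w.length = 2) : ∃ m, G.Adj u m ∧ G.Adj m v ∧ m ∈ w.support := by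
  cases w with
  | nil => simp at h
  | cons h' p =>
    cases p with
    | nil => simp at h
    | cons h'' q =>
      cases q with
      | nil => exact ⟨_, h', h'', by simp⟩
      | cons h3 r => simp [SimpleGraph.Walk.length_cons] at h

private lemma exists_induced_path {G : SimpleGraph V} {u v : V} (w₀ : G.Walk u v) :
    ∃ p : G.Walk u v, p.IsPath ∧ p.length ≤ w₀.length ∧
      ∀ x ∈ p.support, ∀ y ∈ p.support, G.Adj x y → s(x, y) ∈ p.edges := by
  classical
  have hex : ∃ n, ∃ w : G.Walk u v, w.length = n := ⟨_, w₀, rfl⟩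
  obtain ⟨w, hw⟩ := Nat.find_spec hex
  have hmin : ∀ w' : G.Walk u v, Nat.find hex ≤ w'.length := fun w' =>
    le_of_not_gt fun hlt => Nat.find_min hex hlt ⟨w', rfl⟩
  have hml : w.bypass.length = Nat.find hex :=
    le_antisymm (hw ▸ w.length_bypass_le) (hmin _)
  refine ⟨w.bypass, w.bypass_isPath, hml ▸ hmin w₀, ?_⟩
  set m := w.bypass with hmdef
  intro x hx y hy hadj
  by_contra hne
  have hsplitlen : (m.takeUntil x hx).length + (m.dropUntil x hx).length = m.length := by
    have := congr_arg Walk.length (m.take_spec hx)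
    rwa [Walk.length_append] at this
  by_cases hyd : y ∈ (m.dropUntil x hx).support
  · set d := m.dropUntil x hx with hd
    have hdl : (d.takeUntil y hyd).length + (d.dropUntil y hyd).length = d.length := by
      have := congr_arg Walk.length (d.take_spec hyd)
      rwa [Walk.length_append] at this
    have ht2 : 2 ≤ (d.takeUntil y hyd).length := by
      rcases Nat.lt_or_ge (d.takeUntil y hyd).length 2 with h2 | h2
      · interval_cases h : (d.takeUntil y hyd).length
        · exact absurd (Walk.eq_of_length_eq_zero h) hadj.ne
        · exact absurd (m.edges_dropUntil_subset hx
            (d.edges_takeUntil_subset hyd (walk_length_one_edge _ h))) hne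
      · exact h2
    have : ((m.takeUntil x hx).append (Walk.cons hadj (d.dropUntil y hyd))).length < m.length := by
      rw [Walk.length_append, Walk.length_cons]
      omega
    rw [hml] at this
    exact absurd (hmin _) (not_le.mpr this)
  · have hyt : y ∈ (m.takeUntil x hx).support := by
      have := (Walk.mem_support_append_iff (m.takeUntil x hx) (m.dropUntil x hx) (t := y)).mp
        (by rw [m.take_spec hx]; exact hy)
      tauto
    set T := m.takeUntil x hx with hT
    have hTl : (T.takeUntil y hyt).length + (T.dropUntil y hyt).length = T.length := by
      have := congr_arg Walk.length (T.take_spec hyt)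
      rwa [Walk.length_append] at this
    have ht2 : 2 ≤ (T.dropUntil y hyt).length := by
      rcases Nat.lt_or_ge (T.dropUntil y hyt).length 2 with h2 | h2
      · interval_cases h : (T.dropUntil y hyt).length
        · exact absurd (Walk.eq_of_length_eq_zero h).symm hadj.ne
        · refine absurd (m.edges_takeUntil_subset hx
            (T.edges_dropUntil_subset hyt ?_)) hne
          rw [Sym2.eq_swap]
          exact walk_length_one_edge _ h
      · exact h2
    have : ((T.takeUntil y hyt).append (Walk.cons hadj.symm (m.dropUntil x hx))).length
        < m.length := by
      rw [Walk.length_append, Walk.length_cons]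
      omega
    rw [hml] at this
    exact absurd (hmin _) (not_le.mpr this)

private def KG (G : SimpleGraph V) (s : Set V) (f : V → Fin 3) : SimpleGraph V where
  Adj x y := G.Adj x y ∧ x ∈ s ∧ y ∈ s ∧ f x ≠ 1 ∧ f y ≠ 1
  symm := ⟨by rintro x y ⟨h, hx, hy, fx, fy⟩; exact ⟨h.symm, hy, hx, fy, fx⟩⟩
  loopless := ⟨fun x h => G.loopless.irrefl x h.1⟩

private lemma KG_le (G : SimpleGraph V) (s : Set V) (f : V → Fin 3) : KG G s f ≤ G :=
  fun _ _ h => h.1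

private lemma KG_support {G : SimpleGraph V} {s : Set V} {f : V → Fin 3} {u v : V}
    (w : (KG G s f).Walk u v) (hu : u ∈ s) (hu1 : f u ≠ 1) :
    ∀ x ∈ w.support, x ∈ s ∧ f x ≠ 1 := by
  induction w with
  | nil => intro x hx; rw [Walk.support_nil, List.mem_singleton] at hx; subst hx; exact ⟨hu, hu1⟩
  | @cons a b c h p ih =>
    intro x hx
    rw [Walk.support_cons, List.mem_cons] at hx
    rcases hx with rfl | hx
    · exact ⟨hu, hu1⟩
    · exact ih h.2.2.1 h.2.2.2.2 x hx

private lemma KG_parity {G : SimpleGraph V} {s : Set V} {f : V → Fin 3}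
    (hf : ∀ a ∈ s, ∀ b ∈ s, G.Adj a b → f a ≠ f b) {u v : V}
    (w : (KG G s f).Walk u v) (hu : u ∈ s) (hu1 : f u ≠ 1) :
    Even w.length ↔ f u = f v := by
  induction w with
  | nil => simp
  | @cons a b c h p ih =>
    have hb := h.2.2.1
    have hb1 := h.2.2.2.2
    have hne : f a ≠ f b := hf _ h.2.1 _ hb h.1
    have hv1 : f c ≠ 1 := (KG_support p hb hb1 c (Walk.end_mem_support p)).2
    have key : ∀ x y z : Fin 3, x ≠ 1 → y ≠ 1 → z ≠ 1 → x ≠ y → (¬ y = z ↔ x = z) := by decide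
    rw [Walk.length_cons, Nat.even_add_one, ih hb hb1]
    exact key _ _ _ hu1 hb1 hv1 hne

private def swapc : Fin 3 → Fin 3 := fun c => if c = 0 then 2 else if c = 2 then 0 else 1

private lemma kempe_swap {G : SimpleGraph V} {s : Set V} {f : V → Fin 3}
    (hf : ∀ a ∈ s, ∀ b ∈ s, G.Adj a b → f a ≠ f b) (r : V) (hr : r ∈ s) (hr1 : f r ≠ 1) :
    ∃ f' : V → Fin 3, (∀ a ∈ s, ∀ b ∈ s, G.Adj a b → f' a ≠ f' b) ∧
      (∀ x, ¬ (KG G s f).Reachable r x → f' x = f x) ∧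
      (∀ x, (KG G s f).Reachable r x → f' x = swapc (f x)) := by
  classical
  refine ⟨fun v => if (KG G s f).Reachable r v then swapc (f v) else f v, ?_,
    fun x hx => by simp [hx], fun x hx => by simp [hx]⟩
  have hswap_inj : ∀ x y : Fin 3, swapc x = swapc y → x = y := by decide
  have hswap_ne1 : ∀ x : Fin 3, x ≠ 1 → swapc x ≠ 1 := by decide
  intro a ha b hb hadj
  have hmem : ∀ x, (KG G s f).Reachable r x → x ∈ s ∧ f x ≠ 1 := by
    intro x hx
    obtain ⟨w⟩ := hx
    exact KG_support w hr hr1 x (Walk.end_mem_support w)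
  by_cases Ra : (KG G s f).Reachable r a <;> by_cases Rb : (KG G s f).Reachable r b <;>
    simp only [Ra, Rb, if_pos, if_neg, if_true, if_false]
  · exact fun h => hf _ ha _ hb hadj (hswap_inj _ _ h)
  · obtain ⟨has, ha1⟩ := hmem a Ra
    have hb1 : f b = 1 := by
      by_contra hb1
      exact Rb (Ra.trans (Adj.reachable ⟨hadj, has, hb, ha1, hb1⟩))
    rw [hb1]
    exact hswap_ne1 _ ha1
  · obtain ⟨hbs, hb1⟩ := hmem b Rb
    have ha1 : f a = 1 := by
      by_contra ha1
      exact Ra (Rb.trans (Adj.reachable ⟨hadj.symm, hbs, ha, hb1, ha1⟩))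
    rw [ha1]
    exact fun h => hswap_ne1 _ hb1 h.symm
  · exact hf _ ha _ hb hadj

private lemma no_common_neighbor {G : SimpleGraph V} (hG : IsPentagraph G)
    {v₁ v₂ v₃ w : V} (h12 : G.Adj v₁ v₂) (h23 : G.Adj v₂ v₃) (hne : v₁ ≠ v₃)
    (hw2 : w ≠ v₂) (h1w : G.Adj v₁ w) (hw3 : G.Adj w v₃) : False := by
  have e1 : v₁ ≠ v₂ := h12.ne
  have e2 : v₂ ≠ v₁ := h12.ne'
  have e3 : v₂ ≠ v₃ := h23.ne
  have e4 : v₃ ≠ v₂ := h23.ne'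
  have e5 : v₃ ≠ v₁ := hne.symm
  have e6 : v₁ ≠ w := h1w.ne
  have e7 : w ≠ v₁ := h1w.ne'
  have e8 : w ≠ v₃ := hw3.ne
  have e9 : v₃ ≠ w := hw3.ne'
  have e10 : v₂ ≠ w := hw2.symm
  let c : G.Walk v₂ v₂ := .cons h12.symm (.cons h1w (.cons hw3 (.cons h23.symm .nil)))
  have hcyc : c.IsCycle := by
    constructor
    · constructor
      · rw [Walk.isTrail_def]
        simp only [c, Walk.edges_cons, Walk.edges_nil, List.nodup_cons, List.mem_cons,
          List.not_mem_nil, or_false, List.nodup_nil, and_true, Sym2.eq, Sym2.rel_iff',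
          Prod.mk.injEq, Prod.swap_prod_mk]
        tauto
      · simp [c]
    · simp only [c, Walk.support_cons, Walk.support_nil, List.tail_cons, List.nodup_cons,
        List.mem_cons, List.not_mem_nil, or_false, List.nodup_nil, and_true,
        List.mem_singleton]
      tauto
  have h5 := hG.1 v₂ c hcyc
  simp [c] at h5

end Helpers

private lemma crash {G : SimpleGraph V} (hG : IsPentagraph G)
    {v₁ v₂ v₃ : V} (h12 : G.Adj v₁ v₂) (h23 : G.Adj v₂ v₃) (h13 : ¬ G.Adj v₁ v₃)
    (hne : v₁ ≠ v₃) {AE AD : Set V}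
    (hdisj : ∀ x, x ∈ AE → x ∈ AD → False)
    (hanti : ∀ a ∈ AE, ∀ b ∈ AD, ¬ G.Adj a b)
    {fE fD : V → Fin 3}
    (hfE : ∀ a ∈ AE ∪ {v₁, v₂, v₃}, ∀ b ∈ AE ∪ {v₁, v₂, v₃}, G.Adj a b → fE a ≠ fE b)
    (hfD : ∀ a ∈ AD ∪ {v₁, v₂, v₃}, ∀ b ∈ AD ∪ {v₁, v₂, v₃}, G.Adj a b → fD a ≠ fD b)
    (hE1 : fE v₁ = 0) (hE2 : fE v₂ = 1) (hE3 : fE v₃ = 0)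
    (hD1 : fD v₁ = 0) (hD2 : fD v₂ = 1) (hD3 : fD v₃ = 2)
    (wE : (KG G (AE ∪ {v₁, v₂, v₃}) fE).Walk v₃ v₁)
    (wD : (KG G (AD ∪ {v₁, v₂, v₃}) fD).Walk v₃ v₁) : False := by
  classical
  set sE := AE ∪ ({v₁, v₂, v₃} : Set V) with hsE
  set sD := AD ∪ ({v₁, v₂, v₃} : Set V) with hsD
  have hv3E : v₃ ∈ sE := Or.inr (by simp)
  have hv3D : v₃ ∈ sD := Or.inr (by simp)
  have hE3ne : fE v₃ ≠ 1 := by rw [hE3]; decide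
  have hD3ne : fD v₃ ≠ 1 := by rw [hD3]; decide
  obtain ⟨pE, hpE, -, hindE⟩ := exists_induced_path wE
  obtain ⟨pD, hpD, -, hindD⟩ := exists_induced_path wD
  have hsuppE : ∀ x ∈ pE.support, x ∈ sE ∧ fE x ≠ 1 := KG_support pE hv3E hE3ne
  have hsuppD : ∀ x ∈ pD.support, x ∈ sD ∧ fD x ≠ 1 := KG_support pD hv3D hD3ne
  have hmemE : ∀ x ∈ pE.support, x ∈ AE ∨ x = v₁ ∨ x = v₃ := by
    intro x hx
    obtain ⟨hxs, hx1⟩ := hsuppE x hx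
    rcases hxs with hxa | hxX
    · exact Or.inl hxa
    · simp only [Set.mem_insert_iff, Set.mem_singleton_iff] at hxX
      rcases hxX with rfl | rfl | rfl
      · exact Or.inr (Or.inl rfl)
      · exact absurd hE2 hx1
      · exact Or.inr (Or.inr rfl)
  have hmemD : ∀ x ∈ pD.support, x ∈ AD ∨ x = v₁ ∨ x = v₃ := by
    intro x hx
    obtain ⟨hxs, hx1⟩ := hsuppD x hx
    rcases hxs with hxa | hxX
    · exact Or.inl hxa
    · simp only [Set.mem_insert_iff, Set.mem_singleton_iff] at hxX
      rcases hxX with rfl | rfl | rfl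
      · exact Or.inr (Or.inl rfl)
      · exact absurd hD2 hx1
      · exact Or.inr (Or.inr rfl)
  have hparE : Even pE.length := (KG_parity hfE pE hv3E hE3ne).mpr (by rw [hE3, hE1])
  have hparD : ¬ Even pD.length := by
    intro h
    have := (KG_parity hfD pD hv3D hD3ne).mp h
    rw [hD3, hD1] at this
    exact (by decide : (2 : Fin 3) ≠ 0) this
  have hlenE0 : pE.length ≠ 0 := fun h => hne (Walk.eq_of_length_eq_zero h).symm
  have hlenE2 : pE.length ≠ 2 := by
    intro h
    obtain ⟨m, h3m, hm1, hmS⟩ := walk_length_two pE h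
    have hm2 : m ≠ v₂ := fun hh => (hsuppE m hmS).2 (hh ▸ hE2)
    exact no_common_neighbor hG h23.symm h12.symm hne.symm hm2 h3m.1 hm1.1
  have hE4 : 4 ≤ pE.length := by
    obtain ⟨k, hk⟩ := hparE
    omega
  have hlenD1 : pD.length ≠ 1 := by
    intro h
    exact h13 (pD.adj_of_mem_edges (walk_length_one_edge pD h)).1.symm
  have hD3' : 3 ≤ pD.length := by
    have h0 : pD.length ≠ 0 := fun h => hne (Walk.eq_of_length_eq_zero h).symm
    rcases Nat.even_or_odd pD.length with he | ho
    · exact absurd he hparD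
    · obtain ⟨k, hk⟩ := ho
      omega
  let cE : G.Walk v₃ v₁ := pE.mapLe (KG_le G sE fE)
  let cD : G.Walk v₃ v₁ := pD.mapLe (KG_le G sD fD)
  let c : G.Walk v₃ v₃ := cE.append cD.reverse
  have hcEs : cE.support = pE.support := mapLe_support' _ _
  have hcDs : cD.support = pD.support := mapLe_support' _ _
  have hcEe : cE.edges = pE.edges := mapLe_edges' _ _
  have hcDe : cD.edges = pD.edges := mapLe_edges' _ _
  have hclen : c.length = pE.length + pD.length := by
    simp only [c, Walk.length_append, Walk.length_reverse, cE, cD, mapLe_length']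
  have hshare : ∀ x, x ∈ pE.support → x ∈ pD.support → x = v₁ ∨ x = v₃ := by
    intro x hxE hxD
    rcases hmemE x hxE with hE | h | h
    · rcases hmemD x hxD with hD | h | h
      · exact (hdisj x hE hD).elim
      · exact Or.inl h
      · exact Or.inr h
    · exact Or.inl h
    · exact Or.inr h
  have hedge_disj : ∀ e ∈ pE.edges, e ∈ pD.edges → False := by
    intro e heE heD
    induction e using Sym2.ind with
    | _ a b =>
      have haE := pE.fst_mem_support_of_mem_edges heE
      have hbE := pE.snd_mem_support_of_mem_edges heE
      have haD := pD.fst_mem_support_of_mem_edges heD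
      have hbD := pD.snd_mem_support_of_mem_edges heD
      have hab : G.Adj a b := (pE.adj_of_mem_edges heE).1
      rcases hshare a haE haD with rfl | rfl <;> rcases hshare b hbE hbD with rfl | rfl
      · exact hab.ne rfl
      · exact h13 hab
      · exact h13 hab.symm
      · exact hab.ne rfl
  have hnodupE : pE.support.Nodup := hpE.support_nodup
  have hnodupD : pD.support.Nodup := hpD.support_nodup
  have hv3nE : v₃ ∉ pE.support.tail ∧ pE.support.tail.Nodup := by
    have := hnodupE
    rw [pE.support_eq_cons] at this
    exact List.nodup_cons.mp this
  have hqD : cD.reverse.support = pD.support.reverse := by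
    rw [Walk.support_reverse, hcDs]
  have hv1nD : v₁ ∉ cD.reverse.support.tail ∧ cD.reverse.support.tail.Nodup := by
    have h1 : cD.reverse.support.Nodup := by
      rw [hqD]
      exact List.nodup_reverse.mpr hnodupD
    rw [cD.reverse.support_eq_cons] at h1
    exact List.nodup_cons.mp h1
  have hmem_revD : ∀ x, x ∈ cD.reverse.support → x ∈ pD.support := by
    intro x hx
    rw [hqD, List.mem_reverse] at hx
    exact hx
  have hcyc : c.IsCycle := by
    rw [Walk.isCycle_def]
    refine ⟨?_, ?_, ?_⟩
    · rw [Walk.isTrail_def]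
      have hce : c.edges = pE.edges ++ pD.edges.reverse := by
        simp only [c, Walk.edges_append, Walk.edges_reverse, hcEe, hcDe]
      rw [hce]
      refine List.Nodup.append hpE.edges_nodup (List.nodup_reverse.mpr hpD.edges_nodup) ?_
      intro e heE heD
      exact hedge_disj e heE (List.mem_reverse.mp heD)
    · intro hnil
      have : c.length = 0 := by rw [hnil]; rfl
      omega
    · have hts : c.support.tail = pE.support.tail ++ cD.reverse.support.tail := by
        simp only [c, Walk.tail_support_append, hcEs]
      rw [hts]
      refine List.Nodup.append hv3nE.2 hv1nD.2 ?_
      intro x hxE hxD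
      have hxE' : x ∈ pE.support := List.mem_of_mem_tail hxE
      have hxD' : x ∈ pD.support := hmem_revD x (List.mem_of_mem_tail hxD)
      rcases hshare x hxE' hxD' with rfl | rfl
      · exact hv1nD.1 hxD
      · exact hv3nE.1 hxE
  have caseE : ∀ x ∈ pE.support, ∀ y ∈ pE.support, G.Adj x y → s(x, y) ∈ c.edges := by
    intro x hx y hy hxy
    have hKG : (KG G sE fE).Adj x y :=
      ⟨hxy, (hsuppE x hx).1, (hsuppE y hy).1, (hsuppE x hx).2, (hsuppE y hy).2⟩
    have : s(x, y) ∈ pE.edges := hindE x hx y hy hKG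
    simp only [c, Walk.edges_append]
    exact List.mem_append_left _ (hcEe ▸ this)
  have caseD : ∀ x ∈ pD.support, ∀ y ∈ pD.support, G.Adj x y → s(x, y) ∈ c.edges := by
    intro x hx y hy hxy
    have hKG : (KG G sD fD).Adj x y :=
      ⟨hxy, (hsuppD x hx).1, (hsuppD y hy).1, (hsuppD x hx).2, (hsuppD y hy).2⟩
    have : s(x, y) ∈ pD.edges := hindD x hx y hy hKG
    simp only [c, Walk.edges_append]
    refine List.mem_append_right _ ?_
    rw [Walk.edges_reverse, List.mem_reverse]
    exact hcDe ▸ this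
  have hindc : ∀ x ∈ c.support, ∀ y ∈ c.support, G.Adj x y → s(x, y) ∈ c.edges := by
    intro x hx y hy hxy
    have hx' : x ∈ pE.support ∨ x ∈ pD.support := by
      rcases (Walk.mem_support_append_iff _ _).mp hx with h | h
      · exact Or.inl (hcEs ▸ h)
      · exact Or.inr (hmem_revD x h)
    have hy' : y ∈ pE.support ∨ y ∈ pD.support := by
      rcases (Walk.mem_support_append_iff _ _).mp hy with h | h
      · exact Or.inl (hcEs ▸ h)
      · exact Or.inr (hmem_revD y h)
    by_cases hxE : x ∈ pE.support <;> by_cases hyE : y ∈ pE.support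
    · exact caseE x hxE y hyE hxy
    · have hyD : y ∈ pD.support := hy'.resolve_left hyE
      by_cases hxD : x ∈ pD.support
      · exact caseD x hxD y hyD hxy
      · have hxA : x ∈ AE := by
          rcases hmemE x hxE with h | rfl | rfl
          · exact h
          · exact absurd pD.end_mem_support hxD
          · exact absurd pD.start_mem_support hxD
        have hyA : y ∈ AD := by
          rcases hmemD y hyD with h | rfl | rfl
          · exact h
          · exact absurd pE.end_mem_support hyE
          · exact absurd pE.start_mem_support hyE
        exact (hanti x hxA y hyA hxy).elim
    · have hxD : x ∈ pD.support := hx'.resolve_left hxE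
      by_cases hyD : y ∈ pD.support
      · exact caseD x hxD y hyD hxy
      · have hyA : y ∈ AE := by
          rcases hmemE y hyE with h | rfl | rfl
          · exact h
          · exact absurd pD.end_mem_support hyD
          · exact absurd pD.start_mem_support hyD
        have hxA : x ∈ AD := by
          rcases hmemD x hxD with h | rfl | rfl
          · exact h
          · exact absurd pE.end_mem_support hxE
          · exact absurd pE.start_mem_support hxE
        exact (hanti y hyA x hxA hxy.symm).elim
    · have hxD : x ∈ pD.support := hx'.resolve_left hxE
      have hyD : y ∈ pD.support := hy'.resolve_left hyE
      exact caseD x hxD y hyD hxy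
  have hodd : Odd c.length := by
    rw [hclen]
    exact hparE.add_odd (Nat.not_even_iff_odd.mp hparD)
  have h5 := hG.2 v₃ c ⟨hcyc, hindc⟩ hodd
  omega



private lemma normalize_coloring {G : SimpleGraph V} {s : Set V} {f : V → Fin 3}
    (hf : ∀ a ∈ s, ∀ b ∈ s, G.Adj a b → f a ≠ f b) {v₁ v₂ : V} (hne : f v₁ ≠ f v₂) :
    ∃ g : V → Fin 3, (∀ a ∈ s, ∀ b ∈ s, G.Adj a b → g a ≠ g b) ∧ g v₁ = 0 ∧ g v₂ = 1 := by
  classical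
  refine ⟨fun v => if f v = f v₁ then 0 else if f v = f v₂ then 1 else 2, ?_, by simp, ?_⟩
  · intro a ha b hb hadj h
    have key : ∀ p q x y : Fin 3, p ≠ q →
        (if x = p then (0 : Fin 3) else if x = q then 1 else 2) =
        (if y = p then (0 : Fin 3) else if y = q then 1 else 2) → x = y := by decide
    exact hf a ha b hb hadj (key _ _ _ _ hne h)
  · simp [hne.symm]

private lemma glue_colorings {G : SimpleGraph V} {v₁ v₂ v₃ : V} {A₁ A₂ : Set V}
    (hunion : A₁ ∪ A₂ = ({v₁, v₂, v₃} : Set V)ᶜ)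
    (hanti : ∀ a ∈ A₁, ∀ b ∈ A₂, ¬ G.Adj a b)
    {f₁ f₂ : V → Fin 3}
    (h₁ : ∀ a ∈ A₁ ∪ {v₁, v₂, v₃}, ∀ b ∈ A₁ ∪ {v₁, v₂, v₃}, G.Adj a b → f₁ a ≠ f₁ b)
    (h₂ : ∀ a ∈ A₂ ∪ {v₁, v₂, v₃}, ∀ b ∈ A₂ ∪ {v₁, v₂, v₃}, G.Adj a b → f₂ a ≠ f₂ b)
    (e1 : f₁ v₁ = f₂ v₁) (e2 : f₁ v₂ = f₂ v₂) (e3 : f₁ v₃ = f₂ v₃) :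
    G.Colorable 3 := by
  classical
  set s₁ := A₁ ∪ ({v₁, v₂, v₃} : Set V) with hs₁
  have hcover : ∀ v : V, v ∈ A₁ ∨ v ∈ A₂ ∨ v ∈ ({v₁, v₂, v₃} : Set V) := by
    intro v
    by_cases h : v ∈ ({v₁, v₂, v₃} : Set V)
    · exact Or.inr (Or.inr h)
    · have hv : v ∈ A₁ ∪ A₂ := by rw [hunion]; exact h
      rcases hv with h' | h'
      · exact Or.inl h'
      · exact Or.inr (Or.inl h')
  have hXin : ∀ x, x ∈ ({v₁, v₂, v₃} : Set V) → f₁ x = f₂ x := by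
    intro x hx
    simp only [Set.mem_insert_iff, Set.mem_singleton_iff] at hx
    rcases hx with rfl | rfl | rfl <;> assumption
  refine ⟨Coloring.mk (fun v => if v ∈ s₁ then f₁ v else f₂ v) ?_⟩
  intro a b hadj
  show (if a ∈ s₁ then f₁ a else f₂ a) ≠ (if b ∈ s₁ then f₁ b else f₂ b)
  by_cases ha : a ∈ s₁ <;> by_cases hb : b ∈ s₁
  · rw [if_pos ha, if_pos hb]
    exact h₁ a ha b hb hadj
  · rw [if_pos ha, if_neg hb]
    have hbA : b ∈ A₂ := by
      rcases hcover b with h | h | h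
      · exact absurd (Or.inl h) hb
      · exact h
      · exact absurd (Or.inr h) hb
    rcases ha with haA | haX
    · exact absurd hadj (hanti a haA b hbA)
    · rw [hXin a haX]
      exact h₂ a (Or.inr haX) b (Or.inl hbA) hadj
  · rw [if_neg ha, if_pos hb]
    have haA : a ∈ A₂ := by
      rcases hcover a with h | h | h
      · exact absurd (Or.inl h) ha
      · exact h
      · exact absurd (Or.inr h) ha
    rcases hb with hbA | hbX
    · exact absurd hadj.symm (hanti b hbA a haA)
    · rw [hXin b hbX]
      exact h₂ a (Or.inl haA) b (Or.inr hbX) hadj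
  · rw [if_neg ha, if_neg hb]
    have haA : a ∈ A₂ := by
      rcases hcover a with h | h | h
      · exact absurd (Or.inl h) ha
      · exact h
      · exact absurd (Or.inr h) ha
    have hbA : b ∈ A₂ := by
      rcases hcover b with h | h | h
      · exact absurd (Or.inl h) hb
      · exact h
      · exact absurd (Or.inr h) hb
    exact h₂ a (Or.inl haA) b (Or.inl hbA) hadj

/-- gluing 3-colourings across a P₃-cutset of a pentagraph. -/
theorem pentagraph_glue_P3_cutset {V : Type*} [Fintype V] (G : SimpleGraph V)
    (hG : IsPentagraph G) (v₁ v₂ v₃ : V)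
    (h12 : G.Adj v₁ v₂) (h23 : G.Adj v₂ v₃) (h13 : ¬ G.Adj v₁ v₃) (hne : v₁ ≠ v₃)
    (A₁ A₂ : Set V)
    (hunion : A₁ ∪ A₂ = ({v₁, v₂, v₃} : Set V)ᶜ)
    (hdisj : A₁ ∩ A₂ = ∅)
    (hne₁ : A₁.Nonempty) (hne₂ : A₂.Nonempty)
    (hanti : ∀ a ∈ A₁, ∀ b ∈ A₂, ¬ G.Adj a b)
    (hcol₁ : (G.induce (A₁ ∪ {v₁, v₂, v₃})).Colorable 3)
    (hcol₂ : (G.induce (A₂ ∪ {v₁, v₂, v₃})).Colorable 3) :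
    G.Colorable 3 := by
    classical
  set s₁ := A₁ ∪ ({v₁, v₂, v₃} : Set V) with hs₁
  set s₂ := A₂ ∪ ({v₁, v₂, v₃} : Set V) with hs₂
  have hv1s₁ : v₁ ∈ s₁ := Or.inr (by simp)
  have hv2s₁ : v₂ ∈ s₁ := Or.inr (by simp)
  have hv3s₁ : v₃ ∈ s₁ := Or.inr (by simp)
  have hv1s₂ : v₁ ∈ s₂ := Or.inr (by simp)
  have hv2s₂ : v₂ ∈ s₂ := Or.inr (by simp)
  have hv3s₂ : v₃ ∈ s₂ := Or.inr (by simp)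
  obtain ⟨C₁⟩ := hcol₁
  obtain ⟨C₂⟩ := hcol₂
  obtain ⟨f₁, hp₁⟩ : ∃ f : V → Fin 3, ∀ a ∈ s₁, ∀ b ∈ s₁, G.Adj a b → f a ≠ f b := by
    refine ⟨fun v => if h : v ∈ s₁ then C₁ ⟨v, h⟩ else 0, fun a ha b hb hadj => ?_⟩
    simp only [dif_pos ha, dif_pos hb]
    exact C₁.valid hadj
  obtain ⟨f₂, hp₂⟩ : ∃ f : V → Fin 3, ∀ a ∈ s₂, ∀ b ∈ s₂, G.Adj a b → f a ≠ f b := by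
    refine ⟨fun v => if h : v ∈ s₂ then C₂ ⟨v, h⟩ else 0, fun a ha b hb hadj => ?_⟩
    simp only [dif_pos ha, dif_pos hb]
    exact C₂.valid hadj
  obtain ⟨g₁, hg₁, hg₁1, hg₁2⟩ := normalize_coloring hp₁ (hp₁ v₁ hv1s₁ v₂ hv2s₁ h12)
  obtain ⟨g₂, hg₂, hg₂1, hg₂2⟩ := normalize_coloring hp₂ (hp₂ v₁ hv1s₂ v₂ hv2s₂ h12)
  have hfin : ∀ cc : Fin 3, cc ≠ 1 → cc = 0 ∨ cc = 2 := by decide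
  have hg₁3ne : g₁ v₃ ≠ 1 := by
    rw [← hg₁2]
    exact fun h => hg₁ v₃ hv3s₁ v₂ hv2s₁ h23.symm h
  have hg₂3ne : g₂ v₃ ≠ 1 := by
    rw [← hg₂2]
    exact fun h => hg₂ v₃ hv3s₂ v₂ hv2s₂ h23.symm h
  have hg₁3 := hfin _ hg₁3ne
  have hg₂3 := hfin _ hg₂3ne
  have hdisj' : ∀ x, x ∈ A₁ → x ∈ A₂ → False := by
    intro x h1 h2
    have hx : x ∈ A₁ ∩ A₂ := ⟨h1, h2⟩
    rw [hdisj] at hx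
    exact hx
  have hanti' : ∀ a ∈ A₂, ∀ b ∈ A₁, ¬ G.Adj a b := fun a ha b hb h => hanti b hb a ha h.symm
  by_cases heq : g₁ v₃ = g₂ v₃
  · exact glue_colorings hunion hanti hg₁ hg₂ (hg₁1.trans hg₂1.symm) (hg₁2.trans hg₂2.symm) heq
  rcases hg₁3 with h1c | h1c
  · rcases hg₂3 with h2c | h2c
    · exact absurd (h1c.trans h2c.symm) heq
    · -- g₁ v₃ = 0, g₂ v₃ = 2
      by_cases hr1 : (KG G s₁ g₁).Reachable v₃ v₁
      · by_cases hr2 : (KG G s₂ g₂).Reachable v₃ v₁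
        · obtain ⟨wE⟩ := hr1
          obtain ⟨wD⟩ := hr2
          exact (crash hG h12 h23 h13 hne hdisj' hanti hg₁ hg₂ hg₁1 hg₁2 h1c hg₂1 hg₂2 h2c
            wE wD).elim
        · obtain ⟨g₂', hp', hfix, hswap⟩ := kempe_swap hg₂ v₃ hv3s₂ (by rw [h2c]; decide)
          have hnr2 : ¬ (KG G s₂ g₂).Reachable v₃ v₂ := by
            intro h
            obtain ⟨w⟩ := h
            exact (KG_support w hv3s₂ (by rw [h2c]; decide) v₂ w.end_mem_support).2 hg₂2
          refine glue_colorings hunion hanti hg₁ hp' ?_ ?_ ?_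
          · rw [hg₁1, hfix v₁ hr2, hg₂1]
          · rw [hg₁2, hfix v₂ hnr2, hg₂2]
          · rw [h1c, hswap v₃ (Reachable.refl v₃), h2c]; decide
      · obtain ⟨g₁', hp', hfix, hswap⟩ := kempe_swap hg₁ v₃ hv3s₁ (by rw [h1c]; decide)
        have hnr1 : ¬ (KG G s₁ g₁).Reachable v₃ v₂ := by
          intro h
          obtain ⟨w⟩ := h
          exact (KG_support w hv3s₁ (by rw [h1c]; decide) v₂ w.end_mem_support).2 hg₁2
        refine glue_colorings hunion hanti hp' hg₂ ?_ ?_ ?_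
        · rw [hfix v₁ hr1, hg₁1, hg₂1]
        · rw [hfix v₂ hnr1, hg₁2, hg₂2]
        · rw [hswap v₃ (Reachable.refl v₃), h1c, h2c]; decide
  · rcases hg₂3 with h2c | h2c
    · -- g₁ v₃ = 2, g₂ v₃ = 0 : mirrored
      by_cases hr2 : (KG G s₂ g₂).Reachable v₃ v₁
      · by_cases hr1 : (KG G s₁ g₁).Reachable v₃ v₁
        · obtain ⟨wE⟩ := hr2
          obtain ⟨wD⟩ := hr1
          exact (crash hG h12 h23 h13 hne (fun x h2 h1 => hdisj' x h1 h2) hanti' hg₂ hg₁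
            hg₂1 hg₂2 h2c hg₁1 hg₁2 h1c wE wD).elim
        · obtain ⟨g₁', hp', hfix, hswap⟩ := kempe_swap hg₁ v₃ hv3s₁ (by rw [h1c]; decide)
          have hnr1 : ¬ (KG G s₁ g₁).Reachable v₃ v₂ := by
            intro h
            obtain ⟨w⟩ := h
            exact (KG_support w hv3s₁ (by rw [h1c]; decide) v₂ w.end_mem_support).2 hg₁2
          refine glue_colorings hunion hanti hp' hg₂ ?_ ?_ ?_
          · rw [hfix v₁ hr1, hg₁1, hg₂1]
          · rw [hfix v₂ hnr1, hg₁2, hg₂2]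
          · rw [hswap v₃ (Reachable.refl v₃), h1c, h2c]; decide
      · obtain ⟨g₂', hp', hfix, hswap⟩ := kempe_swap hg₂ v₃ hv3s₂ (by rw [h2c]; decide)
        have hnr2 : ¬ (KG G s₂ g₂).Reachable v₃ v₂ := by
          intro h
          obtain ⟨w⟩ := h
          exact (KG_support w hv3s₂ (by rw [h2c]; decide) v₂ w.end_mem_support).2 hg₂2
        refine glue_colorings hunion hanti hg₁ hp' ?_ ?_ ?_
        · rw [hg₁1, hfix v₁ hr2, hg₂1]
        · rw [hg₁2, hfix v₂ hnr2, hg₂2]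
        · rw [h1c, hswap v₃ (Reachable.refl v₃), h2c]; decide
    · exact absurd (h1c.trans h2c.symm) heq
end
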